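/- For every positive integer n, ∫₀^{ϖ/2} sl^{4n+2}(t) dt = [∏_{j=1}^{n} (4j−1)/(4j+1)] · π/(2ϖ), i.e. ∫₀^{ϖ/2} sl^{4n+2}(t) dt = (3/5)·(7/9)·(11/13)·⋯·((4n−1)/(4n+1))·π/(2ϖ); in particular (case n = 0) ∫₀^{ϖ/2} sl²(t) dt = π/(2ϖ). -/

import Mathlib

open Set MeasureTheory Filter

/-- Generalized arcsine: `arcsin_{p,q}(x) = ∫₀ˣ (1 - tᵠ)^(-1/p) dt`. -/
noncomputable def gArcsin (p q x : ℝ) : ℝ := ∫ t in (0:ℝ)..x, (1 - t ^ q) ^ (-(1 / p))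

/-- Generalized pi: `π_{p,q} = 2 ∫₀¹ (1 - tᵠ)^(-1/p) dt`. -/
noncomputable def gPi (p q : ℝ) : ℝ := 2 * gArcsin p q 1

/-- `S` is the generalized sine `sin_{p,q}` (the inverse of `gArcsin p q` on `[0,1]`). -/
def IsGSin (p q : ℝ) (S : ℝ → ℝ) : Prop :=
  ∀ y ∈ Icc (0:ℝ) 1, S (gArcsin p q y) = y

/-- `C` is the generalized cosine `cos_{p,q}`, the derivative of `S = sin_{p,q}`
on `[0, π_{p,q}/2]`. -/
def IsGCos (p q : ℝ) (S C : ℝ → ℝ) : Prop :=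
  ∀ x ∈ Icc (0:ℝ) (gPi p q / 2), HasDerivWithinAt S (C x) (Icc (0:ℝ) (gPi p q / 2)) x

/-! ### Auxiliary material -/

section Aux

/-- The lemniscatic integrand `(1 - t⁴)^(-1/2)`. -/
noncomputable def g0 (t : ℝ) : ℝ := (1 - t ^ (4:ℝ)) ^ (-(1 / (2:ℝ)))

lemma g0_meas : Measurable g0 := by unfold g0; fun_prop

lemma g0_nonneg {t : ℝ} (ht : t ∈ Icc (0:ℝ) 1) : 0 ≤ g0 t := by
  apply Real.rpow_nonneg
  have : t ^ (4:ℝ) ≤ 1 := by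
    rw [show (4:ℝ) = ((4:ℕ):ℝ) by norm_num, Real.rpow_natCast]
    exact pow_le_one₀ ht.1 ht.2
  linarith

lemma g0_pos {t : ℝ} (ht : t ∈ Ico (0:ℝ) 1) : 0 < g0 t := by
  apply Real.rpow_pos_of_pos
  have : t ^ (4:ℝ) < 1 := by
    rw [show (4:ℝ) = ((4:ℕ):ℝ) by norm_num, Real.rpow_natCast]
    exact pow_lt_one₀ ht.1 ht.2 (by norm_num)
  linarith

lemma g0_contAt {t : ℝ} (ht : t ∈ Ico (0:ℝ) 1) : ContinuousAt g0 t := by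
  have h1 : ContinuousAt (fun t : ℝ => 1 - t ^ (4:ℝ)) t :=
    continuousAt_const.sub (Real.continuousAt_rpow_const t 4 (Or.inr (by norm_num)))
  have h2 : (1 : ℝ) - t ^ (4:ℝ) ≠ 0 := by
    have : t ^ (4:ℝ) < 1 := by
      rw [show (4:ℝ) = ((4:ℕ):ℝ) by norm_num, Real.rpow_natCast]
      exact pow_lt_one₀ ht.1 ht.2 (by norm_num)
    linarith
  exact h1.rpow_const (Or.inl h2)

lemma g0_int : IntervalIntegrable g0 volume 0 1 := by
  have hmaj : IntervalIntegrable (fun t : ℝ => (1 - t) ^ (-(1 / (2:ℝ)))) volume 0 1 := by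
    have h := (intervalIntegral.intervalIntegrable_rpow' (a := 0) (b := 1)
      (r := -(1/2)) (by norm_num)).comp_sub_left 1
    simpa using h.symm
  apply hmaj.mono_fun (g0_meas.aestronglyMeasurable)
  rw [Filter.EventuallyLE, ae_restrict_iff' measurableSet_uIoc]
  filter_upwards with t ht
  rw [Set.uIoc_of_le (by norm_num : (0:ℝ) ≤ 1)] at ht
  have ht4 : t ^ (4:ℝ) = t ^ (4:ℕ) := by
    rw [show (4:ℝ) = ((4:ℕ):ℝ) by norm_num, Real.rpow_natCast]
  have hp : t ^ (4:ℕ) ≤ t := pow_le_of_le_one ht.1.le ht.2 (by norm_num)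
  have h1 : 1 - t ≤ 1 - t ^ (4:ℝ) := by rw [ht4]; linarith
  have h0 : 0 ≤ 1 - t ^ (4:ℝ) := by
    rw [ht4]; have := pow_le_one₀ ht.1.le ht.2 (n := 4); linarith
  have hg0 : 0 ≤ g0 t := Real.rpow_nonneg h0 _
  have hmj0 : 0 ≤ (1 - t) ^ (-(1 / (2:ℝ))) := Real.rpow_nonneg (by linarith [ht.2]) _
  rw [Real.norm_eq_abs, Real.norm_eq_abs, abs_of_nonneg hg0, abs_of_nonneg hmj0]
  rcases eq_or_lt_of_le ht.2 with h|h
  · have he : (1:ℝ) - t = 0 := by linarith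
    have h4 : (1:ℝ) - t ^ (4:ℝ) = 0 := by rw [ht4]; rw [show t = 1 by linarith]; norm_num
    unfold g0; rw [he, h4]
  · exact Real.rpow_le_rpow_of_nonpos (by linarith) h1 (by norm_num)

/-- The generalized arcsine `arcsin_{2,4}`, as primitive of `g0`. -/
noncomputable def F0 (x : ℝ) : ℝ := gArcsin 2 4 x

lemma F0_eq (x : ℝ) : F0 x = ∫ t in (0:ℝ)..x, g0 t := rfl

lemma F0_zero : F0 0 = 0 := by rw [F0_eq]; exact intervalIntegral.integral_same

lemma g0_int' {y : ℝ} (hy : y ∈ Icc (0:ℝ) 1) : IntervalIntegrable g0 volume 0 y :=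
  g0_int.mono_set (by
    rw [uIcc_of_le hy.1, uIcc_of_le (show (0:ℝ) ≤ 1 by norm_num)]
    exact Icc_subset_Icc le_rfl hy.2)

lemma F0_deriv {y : ℝ} (hy : y ∈ Ico (0:ℝ) 1) : HasDerivAt F0 (g0 y) y := by
  have h := intervalIntegral.integral_hasDerivAt_right (g0_int' ⟨hy.1, hy.2.le⟩)
    (g0_meas.stronglyMeasurable.stronglyMeasurableAtFilter) (g0_contAt hy)
  exact h

lemma F0_cont : ContinuousOn F0 (Icc (0:ℝ) 1) := by
  have h : IntegrableOn g0 (uIcc (0:ℝ) 1) volume := by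
    rw [uIcc_of_le (by norm_num : (0:ℝ) ≤ 1),
      integrableOn_Icc_iff_integrableOn_Ioc]
    have := g0_int.def'
    rwa [uIoc_of_le (show (0:ℝ) ≤ 1 by norm_num)] at this
  have := intervalIntegral.continuousOn_primitive_interval h
  rw [uIcc_of_le (by norm_num : (0:ℝ) ≤ 1)] at this
  exact this

lemma F0_strictMono : StrictMonoOn F0 (Icc (0:ℝ) 1) := by
  intro x hx y hy hxy
  have hsub : ∀ z ∈ Icc (0:ℝ) 1, IntervalIntegrable g0 volume 0 z := fun z hz => g0_int' hz
  have key : F0 y - F0 x = ∫ t in x..y, g0 t := by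
    rw [F0_eq, F0_eq]
    exact (intervalIntegral.integral_interval_sub_left (hsub y hy) (hsub x hx))
  have hpos : 0 < ∫ t in x..y, g0 t := by
    apply intervalIntegral.intervalIntegral_pos_of_pos_on
    · exact g0_int.mono_set (by
        rw [uIcc_of_le hxy.le, uIcc_of_le (show (0:ℝ) ≤ 1 by norm_num)]
        exact Icc_subset_Icc hx.1 hy.2)
    · intro t ht
      exact g0_pos ⟨hx.1.trans ht.1.le, lt_of_lt_of_le ht.2 hy.2⟩
    · exact hxy
  linarith

lemma F0_image : F0 '' Ico 0 1 = Ico 0 (F0 1) := by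
  apply Subset.antisymm
  · rintro _ ⟨y, hy, rfl⟩
    constructor
    · rw [← F0_zero]
      exact F0_strictMono.monotoneOn (by norm_num) ⟨hy.1, hy.2.le⟩ hy.1
    · exact F0_strictMono ⟨hy.1, hy.2.le⟩ (by norm_num) hy.2
  · rintro t ⟨ht0, ht1⟩
    have := intermediate_value_Icc (by norm_num : (0:ℝ) ≤ 1) F0_cont
    have htm : t ∈ Icc (F0 0) (F0 1) := ⟨by rwa [F0_zero], ht1.le⟩
    obtain ⟨y, hy, hyt⟩ := this htm
    refine ⟨y, ⟨hy.1, ?_⟩, hyt⟩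
    rcases eq_or_lt_of_le hy.2 with h|h
    · exfalso; rw [h] at hyt; rw [hyt] at ht1; exact lt_irrefl _ ht1
    · exact h

lemma F0_one_pos : 0 < F0 1 := by
  rw [← F0_zero]
  exact F0_strictMono (by constructor <;> norm_num) (by constructor <;> norm_num) (by norm_num)

/-- Change of variables `t = arcsin_{2,4} y`. -/
lemma CoV (S : ℝ → ℝ) (hS : ∀ y ∈ Icc (0:ℝ) 1, S (gArcsin 2 4 y) = y) (m : ℕ) :
    ∫ t in (0:ℝ)..(F0 1), S t ^ m = ∫ y in Ioo (0:ℝ) 1, y ^ m * g0 y := by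
  rw [intervalIntegral.integral_of_le F0_one_pos.le, integral_Ioc_eq_integral_Ioo,
    ← integral_Ico_eq_integral_Ioo, ← F0_image,
    integral_image_eq_integral_abs_deriv_smul measurableSet_Ico
      (fun y hy => (F0_deriv hy).hasDerivWithinAt)
      (F0_strictMono.injOn.mono Ico_subset_Icc_self),
    ← integral_Ico_eq_integral_Ioo]
  apply setIntegral_congr_fun measurableSet_Ico
  intro y hy
  have h1 : S (F0 y) = y := hS y ⟨hy.1, hy.2.le⟩
  have h2 : |g0 y| = g0 y := abs_of_nonneg (g0_nonneg ⟨hy.1, hy.2.le⟩)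
  simp only [smul_eq_mul, h1, h2]
  ring

lemma ofReal_integral' {s : Set ℝ} (f : ℝ → ℝ) :
    ∫ x in s, ((f x : ℝ) : ℂ) = ((∫ x in s, f x : ℝ) : ℂ) :=
  integral_ofReal

/-- The real Beta integral in terms of the Gamma function. -/
lemma beta_real (u v : ℝ) (hu : 0 < u) (hv : 0 < v) :
    ∫ x in Ioc (0:ℝ) 1, x ^ (u - 1) * (1 - x) ^ (v - 1)
      = Real.Gamma u * Real.Gamma v / Real.Gamma (u + v) := by
  have hbeta := Complex.Gamma_mul_Gamma_eq_betaIntegral (s := (u:ℂ)) (t := (v:ℂ))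
    (by simpa using hu) (by simpa using hv)
  have hconv : Complex.betaIntegral (u:ℂ) (v:ℂ)
      = ((∫ x in Ioc (0:ℝ) 1, x ^ (u - 1) * (1 - x) ^ (v - 1) : ℝ) : ℂ) := by
    rw [Complex.betaIntegral, intervalIntegral.integral_of_le (by norm_num : (0:ℝ) ≤ 1)]
    have step : ∫ (x : ℝ) in Ioc (0:ℝ) 1, (x:ℂ) ^ ((u:ℂ) - 1) * (1 - (x:ℂ)) ^ ((v:ℂ) - 1)
        = ∫ (x : ℝ) in Ioc (0:ℝ) 1, ((x ^ (u - 1) * (1 - x) ^ (v - 1) : ℝ) : ℂ) := by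
      apply setIntegral_congr_fun measurableSet_Ioc
      intro x hx
      have h1 : ((x:ℝ) : ℂ) ^ ((u:ℂ) - 1) = ((x ^ (u - 1) : ℝ) : ℂ) := by
        rw [Complex.ofReal_cpow hx.1.le]; push_cast; ring_nf
      have h2 : (1 - (x:ℂ)) ^ ((v:ℂ) - 1) = (((1 - x) ^ (v - 1) : ℝ) : ℂ) := by
        rw [show (1 - (x:ℂ)) = (((1 - x : ℝ)) : ℂ) by push_cast; ring,
          Complex.ofReal_cpow (by linarith [hx.2])]
        push_cast; ring_nf
      simp only [h1, h2]
      push_cast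
      ring
    rw [step, ofReal_integral']
  rw [hconv] at hbeta
  have hgamma_pos : (0:ℝ) < Real.Gamma (u + v) := Real.Gamma_pos_of_pos (by linarith)
  have key : ((Real.Gamma u * Real.Gamma v : ℝ) : ℂ)
      = ((Real.Gamma (u + v) * ∫ x in Ioc (0:ℝ) 1, x ^ (u - 1) * (1 - x) ^ (v - 1) : ℝ) : ℂ) := by
    push_cast
    rw [← Complex.Gamma_ofReal, ← Complex.Gamma_ofReal, ← Complex.Gamma_ofReal]
    push_cast at hbeta ⊢
    exact hbeta
  have heq := Complex.ofReal_injective key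
  field_simp
  linarith [heq]

/-- Substitution `u = y⁴` in the lemniscatic moment integral. -/
lemma subst_rpow (a : ℝ) :
    ∫ y in Ioc (0:ℝ) 1, y ^ a * g0 y
      = (1/4) * ∫ u in Ioc (0:ℝ) 1, u ^ ((a + 1)/4 - 1) * (1 - u) ^ (-(1 / (2:ℝ))) := by
  set G : ℝ → ℝ := fun u => u ^ ((a + 1)/4 - 1) * (1 - u) ^ (-(1 / (2:ℝ))) with hG
  have key := MeasureTheory.integral_comp_rpow_Ioi (g := (Ioc (0:ℝ) 1).indicator G)
    (p := 4) (by norm_num)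
  have hL : ∫ x in Ioi (0:ℝ), (|4| * x ^ ((4:ℝ) - 1)) • (Ioc (0:ℝ) 1).indicator G (x ^ (4:ℝ))
      = ∫ x in Ioi (0:ℝ), (Ioc (0:ℝ) 1).indicator (fun x => 4 * (x ^ a * g0 x)) x := by
    apply setIntegral_congr_fun measurableSet_Ioi
    intro x hx
    have hx0 : (0:ℝ) < x := hx
    dsimp only
    by_cases hx1 : x ≤ 1
    · have hmem : x ∈ Ioc (0:ℝ) 1 := ⟨hx0, hx1⟩
      have hmem4 : x ^ (4:ℝ) ∈ Ioc (0:ℝ) 1 :=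
        ⟨Real.rpow_pos_of_pos hx0 _, Real.rpow_le_one hx0.le hx1 (by norm_num)⟩
      rw [indicator_of_mem hmem4, indicator_of_mem hmem, hG]
      dsimp only
      rw [← Real.rpow_mul hx0.le, smul_eq_mul,
        show (4:ℝ) * ((a+1)/4 - 1) = a - 3 by ring,
        show |(4:ℝ)| = 4 by norm_num, show (4:ℝ) - 1 = 3 by norm_num]
      have e4 : x ^ (3:ℝ) * x ^ (a - 3) = x ^ a := by
        rw [← Real.rpow_add hx0]; norm_num
      unfold g0
      rw [← e4]; ring
    · have hxgt : 1 < x := not_le.mp hx1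
      have h4 : ¬ (x ^ (4:ℝ) ∈ Ioc (0:ℝ) 1) := by
        intro h
        have : 1 < x ^ (4:ℝ) :=
          (Real.one_lt_rpow_iff_of_pos hx0).mpr (Or.inl ⟨hxgt, by norm_num⟩)
        linarith [h.2]
      rw [indicator_of_notMem h4, indicator_of_notMem (fun h => hx1 h.2)]
      simp
  rw [hL] at key
  rw [setIntegral_indicator measurableSet_Ioc, setIntegral_indicator measurableSet_Ioc,
    Set.inter_eq_self_of_subset_right Ioc_subset_Ioi_self] at key
  rw [MeasureTheory.integral_const_mul] at key
  have hfin : integral (volume.restrict (Ioc (0:ℝ) 1)) G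
      = ∫ (x : ℝ) in Ioc (0:ℝ) 1, G x := rfl
  rw [hfin]
  linarith [key]

/-- The lemniscatic moments in terms of the Gamma function. -/
lemma Jval (a : ℝ) (ha : 0 ≤ a) :
    ∫ y in Ioo (0:ℝ) 1, y ^ a * g0 y
      = (1/4) * (Real.Gamma ((a + 1)/4) * Real.Gamma (1/2)
          / Real.Gamma ((a + 1)/4 + 1/2)) := by
  rw [← integral_Ioc_eq_integral_Ioo, subst_rpow]
  have hb := beta_real ((a + 1)/4) (1/2) (by linarith) (by norm_num)
  rw [show (1:ℝ)/2 - 1 = -(1/(2:ℝ)) by norm_num] at hb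
  rw [hb]

lemma prod_gamma (n : ℕ) :
    (∏ j ∈ Finset.Icc 1 n, ((4 * (j : ℝ) - 1) / (4 * (j : ℝ) + 1)))
      = Real.Gamma ((n:ℝ) + 3/4) * Real.Gamma (5/4)
        / (Real.Gamma (3/4) * Real.Gamma ((n:ℝ) + 5/4)) := by
  induction n with
  | zero =>
    simp only [Finset.Icc_eq_empty_of_lt (by norm_num : (1:ℕ) > 0), Nat.cast_zero]
    rw [Finset.prod_empty]
    norm_num
    rw [eq_comm, div_eq_one_iff_eq]
    have g3 : (0:ℝ) < Real.Gamma (3/4) := Real.Gamma_pos_of_pos (by norm_num)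
    have g4 : (0:ℝ) < Real.Gamma (5/4) := Real.Gamma_pos_of_pos (by norm_num)
    positivity
  | succ n ih =>
    rw [Finset.prod_Icc_succ_top (Nat.le_add_left 1 n), ih]
    have h1 : ((n+1 : ℕ):ℝ) + 3/4 = ((n:ℝ) + 3/4) + 1 := by push_cast; ring
    have h2 : ((n+1 : ℕ):ℝ) + 5/4 = ((n:ℝ) + 5/4) + 1 := by push_cast; ring
    rw [h1, h2, Real.Gamma_add_one (by positivity), Real.Gamma_add_one (by positivity)]
    have g1 : (0:ℝ) < Real.Gamma ((n:ℝ) + 3/4) := Real.Gamma_pos_of_pos (by positivity)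
    have g2 : (0:ℝ) < Real.Gamma ((n:ℝ) + 5/4) := Real.Gamma_pos_of_pos (by positivity)
    have g3 : (0:ℝ) < Real.Gamma (3/4) := Real.Gamma_pos_of_pos (by norm_num)
    have g4 : (0:ℝ) < Real.Gamma (5/4) := Real.Gamma_pos_of_pos (by norm_num)
    push_cast
    field_simp
    ring

end Aux

/-- Wallis-type formula for the lemniscate sine: for every `n` (the empty product for
`n = 0` giving `∫₀^{ϖ/2} sl² t dt = π/(2ϖ)`),
`∫₀^{ϖ/2} sl^{4n+2} t dt = (3/5)(7/9)(11/13)⋯((4n-1)/(4n+1)) · π/(2ϖ)`. -/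
theorem stmt_15 (S : ℝ → ℝ) (hS : IsGSin 2 4 S) (n : ℕ) :
    ∫ t in (0:ℝ)..(gPi 2 4 / 2), S t ^ (4 * n + 2) =
      (∏ j ∈ Finset.Icc 1 n, ((4 * (j : ℝ) - 1) / (4 * (j : ℝ) + 1))) *
        (Real.pi / (2 * gPi 2 4)) := by
  have hhalf : gPi 2 4 / 2 = F0 1 := by
    show (2 * gArcsin 2 4 1) / 2 = gArcsin 2 4 1; ring
  rw [hhalf, CoV S hS (4 * n + 2)]
  have hnat : ∫ y in Ioo (0:ℝ) 1, y ^ (4 * n + 2 : ℕ) * g0 y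
      = ∫ y in Ioo (0:ℝ) 1, y ^ (((4 * n + 2 : ℕ)) : ℝ) * g0 y := by
    apply setIntegral_congr_fun measurableSet_Ioo
    intro y _
    dsimp only
    rw [← Real.rpow_natCast y (4 * n + 2)]
  rw [hnat, Jval _ (by positivity)]
  have e1 : ((((4 * n + 2 : ℕ)) : ℝ) + 1)/4 = (n:ℝ) + 3/4 := by push_cast; ring
  have e2 : ((n:ℝ) + 3/4) + 1/2 = (n:ℝ) + 5/4 := by ring
  rw [e1, e2, prod_gamma n]
  -- compute the value of `F0 1` and hence `gPi 2 4`
  have hF1 : F0 1 = (1/4) * (Real.Gamma (1/4) * Real.Gamma (1/2) / Real.Gamma (3/4)) := by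
    rw [F0_eq, intervalIntegral.integral_of_le (by norm_num : (0:ℝ) ≤ 1),
      integral_Ioc_eq_integral_Ioo]
    have h0 : ∫ y in Ioo (0:ℝ) 1, g0 y = ∫ y in Ioo (0:ℝ) 1, y ^ (0:ℝ) * g0 y := by
      apply setIntegral_congr_fun measurableSet_Ioo
      intro y hy
      simp
    rw [h0, Jval 0 le_rfl]
    try norm_num
  have hgPi : gPi 2 4 = 2 * F0 1 := rfl
  rw [hgPi, hF1, Real.Gamma_one_half_eq]
  have h54 : Real.Gamma (5/4) = (1/4) * Real.Gamma (1/4) := by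
    rw [show (5/4:ℝ) = 1/4 + 1 by norm_num, Real.Gamma_add_one (by norm_num)]
  have hpi : Real.pi = Real.sqrt Real.pi * Real.sqrt Real.pi :=
    (Real.mul_self_sqrt Real.pi_pos.le).symm
  rw [h54, hpi]
  have g1 : (0:ℝ) < Real.Gamma ((n:ℝ) + 3/4) := Real.Gamma_pos_of_pos (by positivity)
  have g2 : (0:ℝ) < Real.Gamma ((n:ℝ) + 5/4) := Real.Gamma_pos_of_pos (by positivity)
  have g3 : (0:ℝ) < Real.Gamma (3/4) := Real.Gamma_pos_of_pos (by norm_num)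
  have g4 : (0:ℝ) < Real.Gamma (1/4) := Real.Gamma_pos_of_pos (by norm_num)
  have hs : (0:ℝ) < Real.sqrt Real.pi := Real.sqrt_pos.mpr Real.pi_pos
  field_simp
  ring_nf
  rw [Real.sq_sqrt Real.pi_pos.le]
  rw [Real.sq_sqrt Real.pi_pos.le]
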